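/- arXiv:2308.12684 — 3 statements merged into one kernel-verified Lean document; each statement's English description precedes it below -/
import Mathlib

section
/- Let m ≥ 3, let γ : ℝ → EuclideanSpace ℝ (Fin m) be a smooth unit-speed curve, let N be a unit normal field along γ, and let W be a smooth map with ‖W(t)‖ = 1 and W(t) ∈ ℋ(N)_t for all t, such that W is parallel in ℋ(N) (π_{ℋ(N)_t}(W'(t)) = 0 for all t) and the geodesic torsion vector -π_{ℋ(N)_t}(N'(t)) is a scalar multiple of W(t) for every t. Set τ_g(t) = -⟨N'(t), W(t)⟩, θ(t) = -∫₀ᵗ τ_g(s) ds, and Z(t) = -sin(θ(t)) W(t) + cos(θ(t)) N(t). Then Z is a smooth unit normal field along γ and Z'(t) is a scalar multiple of γ'(t) for every t; that is, γ appears as a line of curvature of an oriented hypersurface with unit normal Z along γ. -/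
open scoped RealInnerProductSpace

/-- Orthogonal projection onto `ℋ(N)ₜ`, the orthogonal complement of
`span{γ'(t), N(t)}` in `EuclideanSpace ℝ (Fin m)`. -/
noncomputable def projH {m : ℕ} (γ N : ℝ → EuclideanSpace ℝ (Fin m)) (t : ℝ)
    (x : EuclideanSpace ℝ (Fin m)) : EuclideanSpace ℝ (Fin m) :=
  (Submodule.orthogonalProjectionOnto ((Submodule.span ℝ {deriv γ t, N t})ᗮ) x :
    EuclideanSpace ℝ (Fin m))

/-- If `N` is torsion-defining with parallel torsion direction `W`, then the rotated
normal `Z = -sin θ · W + cos θ · N`, with `θ(t) = -∫₀ᵗ τ_g`, exhibits `γ` as a line of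
curvature of an oriented hypersurface. -/
theorem exists_line_of_curvature_of_open_curve
    (m : ℕ) (hm : 3 ≤ m)
    (γ : ℝ → EuclideanSpace ℝ (Fin m))
    (hsmooth : ContDiff ℝ (⊤ : ℕ∞) γ)
    (hunit : ∀ t, ‖deriv γ t‖ = 1)
    (N : ℝ → EuclideanSpace ℝ (Fin m))
    (hNsmooth : ContDiff ℝ (⊤ : ℕ∞) N)
    (hNunit : ∀ t, ‖N t‖ = 1)
    (hNorth : ∀ t, ⟪N t, deriv γ t⟫ = 0)
    (W : ℝ → EuclideanSpace ℝ (Fin m))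
    (hWsmooth : ContDiff ℝ (⊤ : ℕ∞) W)
    (hWunit : ∀ t, ‖W t‖ = 1)
    (hWmem : ∀ t, W t ∈ (Submodule.span ℝ {deriv γ t, N t})ᗮ)
    (hWparallel : ∀ t, projH γ N t (deriv W t) = 0)
    (hWtorsion : ∀ t, ∃ c : ℝ, -projH γ N t (deriv N t) = c • W t)
    (τg : ℝ → ℝ) (hτg : ∀ t, τg t = -⟪deriv N t, W t⟫)
    (θ : ℝ → ℝ) (hθ : ∀ t, θ t = -∫ s in (0:ℝ)..t, τg s)
    (Z : ℝ → EuclideanSpace ℝ (Fin m))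
    (hZ : ∀ t, Z t = -Real.sin (θ t) • W t + Real.cos (θ t) • N t) :
    ContDiff ℝ (⊤ : ℕ∞) Z ∧
      (∀ t, ‖Z t‖ = 1) ∧
      (∀ t, ⟪Z t, deriv γ t⟫ = 0) ∧
      (∀ t, ∃ c : ℝ, deriv Z t = c • deriv γ t) := by
  have hNd : Differentiable ℝ N := hNsmooth.differentiable (by simp)
  have hWd : Differentiable ℝ W := hWsmooth.differentiable (by simp)
  have hN' : ContDiff ℝ (⊤ : ℕ∞) (deriv N) := (contDiff_infty_iff_deriv.mp hNsmooth).2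
  -- orthogonality facts
  have hWγ : ∀ t, ⟪deriv γ t, W t⟫ = 0 := fun t =>
    (Submodule.mem_orthogonal _ _).mp (hWmem t) _ (Submodule.subset_span (by simp))
  have hWN : ∀ t, ⟪N t, W t⟫ = 0 := fun t =>
    (Submodule.mem_orthogonal _ _).mp (hWmem t) _ (Submodule.subset_span (by simp))
  -- τg is smooth
  have hτeq : τg = fun t => -⟪deriv N t, W t⟫ := funext hτg
  have hτsmooth : ContDiff ℝ (⊤ : ℕ∞) τg := by
    rw [hτeq]; exact (hN'.inner ℝ hWsmooth).neg
  have hτcont : Continuous τg := hτsmooth.continuous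
  -- θ has derivative -τg
  have hθd : ∀ t, HasDerivAt θ (-(τg t)) t := by
    intro t
    have h1 : HasDerivAt (fun u => ∫ s in (0:ℝ)..u, τg s) (τg t) t :=
      intervalIntegral.integral_hasDerivAt_right (hτcont.intervalIntegrable _ _)
        hτcont.aestronglyMeasurable.stronglyMeasurableAtFilter hτcont.continuousAt
    have h2 := h1.neg
    have heq : θ = fun u => -∫ s in (0:ℝ)..u, τg s := funext hθ
    rw [heq]; exact h2
  have hθdiff : Differentiable ℝ θ := fun t => (hθd t).differentiableAt
  have hθderiv : deriv θ = fun t => -(τg t) := funext fun t => (hθd t).deriv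
  have hθsmooth : ContDiff ℝ (⊤ : ℕ∞) θ := by
    rw [contDiff_infty_iff_deriv]
    exact ⟨hθdiff, by rw [hθderiv]; exact hτsmooth.neg⟩
  -- Z smooth
  have hZeq : Z = fun t => -Real.sin (θ t) • W t + Real.cos (θ t) • N t := funext hZ
  have hZsmooth : ContDiff ℝ (⊤ : ℕ∞) Z := by
    rw [hZeq]
    exact (((Real.contDiff_sin.comp hθsmooth).neg).smul hWsmooth).add
      ((Real.contDiff_cos.comp hθsmooth).smul hNsmooth)
  refine ⟨hZsmooth, ?_, ?_, ?_⟩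
  · -- unit norm
    intro t
    have h1 : ⟪Z t, Z t⟫ = 1 := by
      rw [hZ t]
      have hWW : ⟪W t, W t⟫ = 1 := by
        rw [real_inner_self_eq_norm_sq, hWunit t]; norm_num
      have hNN : ⟪N t, N t⟫ = 1 := by
        rw [real_inner_self_eq_norm_sq, hNunit t]; norm_num
      have hNW := hWN t
      have hWN' : ⟪W t, N t⟫ = 0 := by rw [real_inner_comm]; exact hNW
      simp only [inner_add_add_self, real_inner_smul_left, real_inner_smul_right,
        hWW, hNN, hNW, hWN']
      have := Real.sin_sq_add_cos_sq (θ t)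
      nlinarith
    have h2 : ‖Z t‖ ^ 2 = 1 := by rw [← real_inner_self_eq_norm_sq, h1]
    nlinarith [norm_nonneg (Z t)]
  · -- orthogonal to γ'
    intro t
    rw [hZ t]
    have h1 : ⟪W t, deriv γ t⟫ = 0 := by rw [real_inner_comm]; exact hWγ t
    rw [inner_add_left, real_inner_smul_left, real_inner_smul_left, h1, hNorth t]
    ring
  · -- line of curvature
    intro t
    set K : Submodule ℝ (EuclideanSpace ℝ (Fin m)) := Submodule.span ℝ {deriv γ t, N t} with hK
    have hKK : Kᗮᗮ = K := Submodule.orthogonal_orthogonal K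
    -- deriv W t ∈ K
    have hWK : deriv W t ∈ K := by
      have h0 : projH γ N t (deriv W t) = 0 := hWparallel t
      have h1 : Submodule.orthogonalProjectionOnto Kᗮ (deriv W t) = 0 :=
        ZeroMemClass.coe_eq_zero.mp h0
      rw [← hKK]
      exact Submodule.orthogonalProjectionOnto_eq_zero_iff.mp h1
    -- deriv N t + c • W t ∈ K
    obtain ⟨c, hc⟩ := hWtorsion t
    have hPN : (Submodule.orthogonalProjectionOnto Kᗮ (deriv N t) : EuclideanSpace ℝ (Fin m))
        = (-c) • W t := by
      have h2 : projH γ N t (deriv N t) = -(c • W t) := by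
        rw [← hc]; abel
      rw [show (Submodule.orthogonalProjectionOnto Kᗮ (deriv N t) : EuclideanSpace ℝ (Fin m))
        = projH γ N t (deriv N t) from rfl, h2, neg_smul]
    have hNK : deriv N t + c • W t ∈ K := by
      have h3 : deriv N t - (Submodule.orthogonalProjectionOnto Kᗮ (deriv N t) : EuclideanSpace ℝ (Fin m)) ∈ Kᗮᗮ :=
        Submodule.sub_starProjection_mem_orthogonal (K := Kᗮ) (deriv N t)
      rw [hPN] at h3
      have h3' : deriv N t - -c • W t = deriv N t + c • W t := by module
      rw [h3'] at h3
      rw [← hKK]; exact h3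
    -- c = τg t
    have hWWt : ⟪W t, W t⟫ = 1 := by
      rw [real_inner_self_eq_norm_sq, hWunit t]; norm_num
    have hcτ : c = τg t := by
      have h4 : ⟪deriv N t + c • W t, W t⟫ = 0 :=
        (Submodule.mem_orthogonal _ _).mp (hWmem t) _ hNK
      rw [inner_add_left, real_inner_smul_left, hWWt] at h4
      rw [hτg t]; linarith
    -- inner products with N
    have hNN0 : ⟪deriv N t, N t⟫ = 0 := by
      have hf : ∀ s, ⟪N s, N s⟫ = (1:ℝ) := fun s => by
        rw [real_inner_self_eq_norm_sq, hNunit s]; norm_num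
      have h5 : HasDerivAt (fun s => ⟪N s, N s⟫) (⟪N t, deriv N t⟫ + ⟪deriv N t, N t⟫) t :=
        HasDerivAt.inner ℝ (hNd t).hasDerivAt (hNd t).hasDerivAt
      have h6 : HasDerivAt (fun s => ⟪N s, N s⟫) 0 t := by
        have heq2 : (fun s => ⟪N s, N s⟫) = fun _ => (1:ℝ) := funext hf
        rw [heq2]; exact hasDerivAt_const t 1
      have h7 := h5.unique h6
      have hcomm : ⟪N t, deriv N t⟫ = ⟪deriv N t, N t⟫ := real_inner_comm _ _
      rw [hcomm] at h7
      linarith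
    have hWN0 : ⟪deriv W t, N t⟫ = τg t := by
      have hf : ∀ s, ⟪W s, N s⟫ = (0:ℝ) := fun s => by
        rw [real_inner_comm]; exact hWN s
      have h5 : HasDerivAt (fun s => ⟪W s, N s⟫) (⟪W t, deriv N t⟫ + ⟪deriv W t, N t⟫) t :=
        HasDerivAt.inner ℝ (hWd t).hasDerivAt (hNd t).hasDerivAt
      have h6 : HasDerivAt (fun s => ⟪W s, N s⟫) 0 t := by
        have heq2 : (fun s => ⟪W s, N s⟫) = fun _ => (0:ℝ) := funext hf
        rw [heq2]; exact hasDerivAt_const t 0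
      have h7 := h5.unique h6
      have hcomm : ⟪W t, deriv N t⟫ = ⟪deriv N t, W t⟫ := real_inner_comm _ _
      rw [hcomm] at h7
      rw [hτg t]
      linarith
    have hNγ0 : ⟪deriv γ t, N t⟫ = 0 := by rw [real_inner_comm]; exact hNorth t
    have hNNt : ⟪N t, N t⟫ = 1 := by
      rw [real_inner_self_eq_norm_sq, hNunit t]; norm_num
    -- decompose deriv W t
    obtain ⟨s₁, r₁, hW'⟩ := Submodule.mem_span_pair.mp hWK
    have hr₁ : r₁ = τg t := by
      have h8 := congrArg (fun x => ⟪x, N t⟫) hW'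
      simp only [inner_add_left, real_inner_smul_left, hNγ0, hNNt, hWN0] at h8
      linarith
    -- decompose deriv N t + τg t • W t
    rw [hcτ] at hNK
    obtain ⟨s₂, r₂, hN'⟩ := Submodule.mem_span_pair.mp hNK
    have hr₂ : r₂ = 0 := by
      have h8 := congrArg (fun x => ⟪x, N t⟫) hN'
      have hWNt : ⟪W t, N t⟫ = 0 := by rw [real_inner_comm]; exact hWN t
      simp only [inner_add_left, real_inner_smul_left, hNγ0, hNNt, hWNt, hNN0] at h8
      linarith
    rw [hr₁] at hW'
    rw [hr₂] at hN'
    have hW'eq : deriv W t = s₁ • deriv γ t + τg t • N t := hW'.symm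
    have hN'eq : deriv N t = s₂ • deriv γ t - τg t • W t := by
      have h9 : s₂ • deriv γ t + (0:ℝ) • N t = deriv N t + τg t • W t := hN'
      simp only [zero_smul, add_zero] at h9
      rw [h9]; abel
    -- compute deriv Z t
    have hsin : HasDerivAt (fun s => Real.sin (θ s)) (Real.cos (θ t) * -(τg t)) t :=
      (Real.hasDerivAt_sin (θ t)).comp t (hθd t)
    have hcos : HasDerivAt (fun s => Real.cos (θ s)) (-Real.sin (θ t) * -(τg t)) t :=
      (Real.hasDerivAt_cos (θ t)).comp t (hθd t)
    have hZd : HasDerivAt Z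
        ((-Real.sin (θ t)) • deriv W t + (-(Real.cos (θ t) * -(τg t))) • W t +
          ((Real.cos (θ t)) • deriv N t + (-Real.sin (θ t) * -(τg t)) • N t)) t := by
      rw [hZeq]
      exact ((hsin.neg.smul (hWd t).hasDerivAt)).add (hcos.smul (hNd t).hasDerivAt)
    refine ⟨-Real.sin (θ t) * s₁ + Real.cos (θ t) * s₂, ?_⟩
    rw [hZd.deriv, hW'eq, hN'eq]
    module
end

section
/- Let m ≥ 3, let γ : ℝ → EuclideanSpace ℝ (Fin m) be a smooth unit-speed curve, closed with period ℓ > 0, let N be a unit normal field along γ with N(t + ℓ) = N(t), and let W be a smooth map with W(t + ℓ) = W(t), ‖W(t)‖ = 1, W(t) ∈ ℋ(N)_t for all t, such that W is parallel in ℋ(N) and the geodesic torsion vector -π_{ℋ(N)_t}(N'(t)) is a scalar multiple of W(t) for every t. Set τ_g(t) = -⟨N'(t), W(t)⟩ and suppose ∫₀^ℓ τ_g(t) dt = 2πn for some integer n. Then Z(t) = -sin(θ(t)) W(t) + cos(θ(t)) N(t), with θ(t) = -∫₀ᵗ τ_g(s) ds, is a smooth unit normal field along γ satisfying Z(t + ℓ)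 = Z(t) for all t and such that Z'(t) is a scalar multiple of γ'(t) for every t. -/
open scoped RealInnerProductSpace

/-- Closed case: if the total geodesic torsion of `γ` with respect to `N` is an integer
multiple of `2π`, then the rotated normal `Z = -sin θ · W + cos θ · N`, with
`θ(t) = -∫₀ᵗ τ_g`, is a closed unit normal field exhibiting `γ` as a line of curvature. -/
theorem exists_line_of_curvature_of_closed_curve
    (m : ℕ) (hm : 3 ≤ m)
    (γ : ℝ → EuclideanSpace ℝ (Fin m)) (ℓ : ℝ) (hℓ : 0 < ℓ)
    (hsmooth : ContDiff ℝ (⊤ : ℕ∞) γ)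
    (hunit : ∀ t, ‖deriv γ t‖ = 1)
    (hclosed : ∀ t, γ (t + ℓ) = γ t)
    (N : ℝ → EuclideanSpace ℝ (Fin m))
    (hNsmooth : ContDiff ℝ (⊤ : ℕ∞) N)
    (hNclosed : ∀ t, N (t + ℓ) = N t)
    (hNunit : ∀ t, ‖N t‖ = 1)
    (hNorth : ∀ t, ⟪N t, deriv γ t⟫ = 0)
    (W : ℝ → EuclideanSpace ℝ (Fin m))
    (hWsmooth : ContDiff ℝ (⊤ : ℕ∞) W)
    (hWclosed : ∀ t, W (t + ℓ) = W t)
    (hWunit : ∀ t, ‖W t‖ = 1)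
    (hWmem : ∀ t, W t ∈ (Submodule.span ℝ {deriv γ t, N t})ᗮ)
    (hWparallel : ∀ t, projH γ N t (deriv W t) = 0)
    (hWtorsion : ∀ t, ∃ c : ℝ, -projH γ N t (deriv N t) = c • W t)
    (τg : ℝ → ℝ) (hτg : ∀ t, τg t = -⟪deriv N t, W t⟫)
    (n : ℤ) (htotal : ∫ t in (0:ℝ)..ℓ, τg t = 2 * Real.pi * n)
    (θ : ℝ → ℝ) (hθ : ∀ t, θ t = -∫ s in (0:ℝ)..t, τg s)
    (Z : ℝ → EuclideanSpace ℝ (Fin m))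
    (hZ : ∀ t, Z t = -Real.sin (θ t) • W t + Real.cos (θ t) • N t) :
    ContDiff ℝ (⊤ : ℕ∞) Z ∧
      (∀ t, ‖Z t‖ = 1) ∧
      (∀ t, ⟪Z t, deriv γ t⟫ = 0) ∧
      (∀ t, Z (t + ℓ) = Z t) ∧
      (∀ t, ∃ c : ℝ, deriv Z t = c • deriv γ t) := by
  have hone : (1 : WithTop ℕ∞) ≤ ((⊤ : ℕ∞) : WithTop ℕ∞) := by
    exact_mod_cast le_top
  -- differentiability of the data
  have hNdiff : Differentiable ℝ N := hNsmooth.differentiable (by simp)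
  have hWdiff : Differentiable ℝ W := hWsmooth.differentiable (by simp)
  have hdN : ∀ t, HasDerivAt N (deriv N t) t := fun t => (hNdiff t).hasDerivAt
  have hdW : ∀ t, HasDerivAt W (deriv W t) t := fun t => (hWdiff t).hasDerivAt
  -- smoothness of τg
  have hτeq : τg = fun t => -⟪deriv N t, W t⟫ := funext hτg
  have hN'smooth : ContDiff ℝ (⊤ : ℕ∞) (deriv N) :=
    (contDiff_infty_iff_deriv.mp hNsmooth).2
  have hτs : ContDiff ℝ (⊤ : ℕ∞) τg := by
    rw [hτeq]; exact (hN'smooth.inner ℝ hWsmooth).neg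
  have hτcont : Continuous τg := hτs.continuous
  -- derivative of θ
  have hθd : ∀ t, HasDerivAt θ (-(τg t)) t := by
    intro t
    have h1 : HasDerivAt (fun u => ∫ s in (0:ℝ)..u, τg s) (τg t) t :=
      (hτcont.integral_hasStrictDerivAt 0 t).hasDerivAt
    have h2 := h1.neg
    have hθeq : θ = fun u => -∫ s in (0:ℝ)..u, τg s := funext hθ
    rw [hθeq]; exact h2
  have hθdiff : Differentiable ℝ θ := fun t => (hθd t).differentiableAt
  have hθs : ContDiff ℝ (⊤ : ℕ∞) θ := by
    refine contDiff_infty_iff_deriv.mpr ⟨hθdiff, ?_⟩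
    have : deriv θ = fun t => -(τg t) := funext fun t => (hθd t).deriv
    rw [this]; exact hτs.neg
  have hZeq : Z = fun t => -Real.sin (θ t) • W t + Real.cos (θ t) • N t := funext hZ
  -- basic orthogonality relations
  have hWN : ∀ t, ⟪W t, N t⟫ = 0 := by
    intro t
    have hNS : N t ∈ Submodule.span ℝ {deriv γ t, N t} :=
      Submodule.subset_span (by simp)
    have := (Submodule.mem_orthogonal _ (W t)).mp (hWmem t) (N t) hNS
    rw [real_inner_comm] at this; exact this
  have hWu : ∀ t, ⟪W t, deriv γ t⟫ = 0 := by
    intro t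
    have hS : deriv γ t ∈ Submodule.span ℝ {deriv γ t, N t} :=
      Submodule.subset_span (by simp)
    have := (Submodule.mem_orthogonal _ (W t)).mp (hWmem t) _ hS
    rw [real_inner_comm] at this; exact this
  have hNN : ∀ t, ⟪N t, N t⟫ = 1 := by
    intro t; rw [real_inner_self_eq_norm_sq, hNunit]; norm_num
  -- ⟪N', N⟫ = 0
  have hN'N : ∀ t, ⟪deriv N t, N t⟫ = 0 := by
    intro t
    have h1 : HasDerivAt (fun s => ⟪N s, N s⟫) (⟪N t, deriv N t⟫ + ⟪deriv N t, N t⟫) t :=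
      (hdN t).inner ℝ (hdN t)
    have h2 : (fun s => ⟪N s, N s⟫) = fun _ => (1:ℝ) := funext fun s => hNN s
    rw [h2] at h1
    have := h1.unique (hasDerivAt_const t (1:ℝ))
    have hcomm : ⟪N t, deriv N t⟫ = ⟪deriv N t, N t⟫ := real_inner_comm _ _
    linarith [this, hcomm]
  -- ⟪W', N⟫ = τg
  have hW'N : ∀ t, ⟪deriv W t, N t⟫ = τg t := by
    intro t
    have h1 : HasDerivAt (fun s => ⟪W s, N s⟫) (⟪W t, deriv N t⟫ + ⟪deriv W t, N t⟫) t :=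
      (hdW t).inner ℝ (hdN t)
    have h2 : (fun s => ⟪W s, N s⟫) = fun _ => (0:ℝ) := funext fun s => hWN s
    rw [h2] at h1
    have h3 := h1.unique (hasDerivAt_const t (0:ℝ))
    have hcomm : ⟪W t, deriv N t⟫ = ⟪deriv N t, W t⟫ := real_inner_comm _ _
    have := hτg t
    linarith [h3, hcomm, this]
  -- structure of W'
  have hW'dec : ∀ t, ∃ a : ℝ, deriv W t = a • deriv γ t + τg t • N t := by
    intro t
    have h0 : Submodule.orthogonalProjectionOnto ((Submodule.span ℝ {deriv γ t, N t})ᗮ) (deriv W t) = 0 := by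
      have h := hWparallel t
      unfold projH at h
      exact Subtype.coe_injective h
    have h1 := Submodule.orthogonalProjectionOnto_eq_zero_iff.mp h0
    rw [Submodule.orthogonal_orthogonal] at h1
    obtain ⟨a, b, hab⟩ := Submodule.mem_span_pair.mp h1
    refine ⟨a, ?_⟩
    have hb : b = τg t := by
      have := hW'N t
      rw [← hab, inner_add_left, real_inner_smul_left, real_inner_smul_left,
        hNN] at this
      have huN : ⟪deriv γ t, N t⟫ = 0 := by
        rw [real_inner_comm]; exact hNorth t
      rw [huN] at this; linarith
    rw [← hab, hb]
  -- structure of N'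
  have hN'dec : ∀ t, ∃ p : ℝ, deriv N t = p • deriv γ t - τg t • W t := by
    intro t
    set K := (Submodule.span ℝ {deriv γ t, N t})ᗮ with hK
    have hWK : W t ∈ K := hWmem t
    -- ⟪proj N', W⟫ = ⟪N', W⟫
    have hsub : deriv N t - (Submodule.orthogonalProjectionOnto K (deriv N t) : EuclideanSpace ℝ (Fin m))
        ∈ Kᗮ := Submodule.sub_starProjection_mem_orthogonal _
    have hinner :
        ⟪(Submodule.orthogonalProjectionOnto K (deriv N t) : EuclideanSpace ℝ (Fin m)), W t⟫
          = ⟪deriv N t, W t⟫ := by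
      have h0 := (Submodule.mem_orthogonal _ _).mp hsub (W t) hWK
      rw [real_inner_comm] at h0
      rw [inner_sub_left] at h0
      linarith
    obtain ⟨c, hc⟩ := hWtorsion t
    have hc' : projH γ N t (deriv N t) = -(c • W t) := by
      rw [← hc]; simp
    have hWW : ⟪W t, W t⟫ = 1 := by
      rw [real_inner_self_eq_norm_sq, hWunit]; norm_num
    have hcval : c = τg t := by
      have h1 : ⟪projH γ N t (deriv N t), W t⟫ = -c := by
        rw [hc', inner_neg_left, real_inner_smul_left, hWW]; ring
      have h2 : ⟪projH γ N t (deriv N t), W t⟫ = ⟪deriv N t, W t⟫ := by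
        unfold projH; exact hinner
      have := hτg t
      linarith [h1, h2, this]
    -- N' - proj N' ∈ Kᗮ = span
    have hproj : (Submodule.orthogonalProjectionOnto K (deriv N t) : EuclideanSpace ℝ (Fin m))
        = -(τg t • W t) := by
      have : projH γ N t (deriv N t)
          = (Submodule.orthogonalProjectionOnto K (deriv N t) : EuclideanSpace ℝ (Fin m)) := rfl
      rw [← this, hc', hcval]
    rw [hproj] at hsub
    rw [hK, Submodule.orthogonal_orthogonal] at hsub
    obtain ⟨p, q, hpq⟩ := Submodule.mem_span_pair.mp hsub
    refine ⟨p, ?_⟩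
    have hq : q = 0 := by
      have hinnN : ⟪deriv N t - -(τg t • W t), N t⟫ = 0 := by
        rw [inner_sub_left, inner_neg_left, real_inner_smul_left, hN'N t,
          hWN t]; ring
      rw [← hpq, inner_add_left, real_inner_smul_left, real_inner_smul_left,
        hNN] at hinnN
      have huN : ⟪deriv γ t, N t⟫ = 0 := by
        rw [real_inner_comm]; exact hNorth t
      rw [huN] at hinnN; linarith
    have : p • deriv γ t + q • N t = deriv N t + τg t • W t := by
      rw [hpq]; abel
    rw [hq] at this
    simp only [zero_smul, add_zero] at this
    rw [eq_sub_iff_add_eq]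
    exact this.symm
  -- periodicity of τg
  have hτper : ∀ t, τg (t + ℓ) = τg t := by
    intro t
    have hNfun : (fun x => N (x + ℓ)) = N := funext hNclosed
    have hdNper : deriv N (t + ℓ) = deriv N t := by
      have := deriv_comp_add_const (f := N) (a := ℓ) (x := t)
      rw [hNfun] at this
      exact this.symm
    rw [hτg, hτg, hdNper, hWclosed]
  have hτperiodic : Function.Periodic τg ℓ := hτper
  -- periodicity of θ modulo 2πn
  have hθper : ∀ t, θ (t + ℓ) = θ t - 2 * Real.pi * n := by
    intro t
    have hint : ∀ t₁ t₂ : ℝ, IntervalIntegrable τg MeasureTheory.volume t₁ t₂ :=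
      fun t₁ t₂ => hτcont.intervalIntegrable t₁ t₂
    have h1 := hτperiodic.intervalIntegral_add_eq_add 0 t hint
    have h2 : (∫ x in (0:ℝ)..(0 + ℓ), τg x) = 2 * Real.pi * n := by
      rw [zero_add]; exact htotal
    rw [hθ, hθ, h1, h2]; ring
  -- Z is smooth
  have hZs : ContDiff ℝ (⊤ : ℕ∞) Z := by
    rw [hZeq]
    exact ((hθs.sin.neg).smul hWsmooth).add (hθs.cos.smul hNsmooth)
  refine ⟨hZs, ?_, ?_, ?_, ?_⟩
  · -- unit norm
    intro t
    have hsq : ‖Z t‖ ^ 2 = 1 := by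
      rw [hZ, norm_add_sq_real, norm_smul, norm_smul, real_inner_smul_left,
        real_inner_smul_right, hWN t, hWunit, hNunit]
      simp only [mul_pow, mul_zero, mul_one, norm_neg, Real.norm_eq_abs, sq_abs,
        one_pow, add_zero, zero_add]
      nlinarith [Real.sin_sq_add_cos_sq (θ t)]
    nlinarith [norm_nonneg (Z t), hsq]
  · -- orthogonal to γ'
    intro t
    rw [hZ, inner_add_left, real_inner_smul_left, real_inner_smul_left,
      hWu t, hNorth t]; ring
  · -- closed
    intro t
    rw [hZ, hZ, hθper, hWclosed, hNclosed]
    have hsin : Real.sin (θ t - 2 * Real.pi * n) = Real.sin (θ t) := by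
      have : θ t - 2 * Real.pi * n = θ t - (n : ℝ) * (2 * Real.pi) := by ring
      rw [this, Real.sin_sub_int_mul_two_pi]
    have hcos : Real.cos (θ t - 2 * Real.pi * n) = Real.cos (θ t) := by
      have : θ t - 2 * Real.pi * n = θ t - (n : ℝ) * (2 * Real.pi) := by ring
      rw [this, Real.cos_sub_int_mul_two_pi]
    rw [hsin, hcos]
  · -- line of curvature
    intro t
    obtain ⟨a, hW'⟩ := hW'dec t
    obtain ⟨p, hN'⟩ := hN'dec t
    have hZd : HasDerivAt Z
        (((-Real.sin (θ t)) • deriv W t + (-(Real.cos (θ t) * -(τg t))) • W t) +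
          ((Real.cos (θ t)) • deriv N t + (-Real.sin (θ t) * -(τg t)) • N t)) t := by
      rw [hZeq]
      exact (((hθd t).sin.neg).smul (hdW t)).add (((hθd t).cos).smul (hdN t))
    refine ⟨-Real.sin (θ t) * a + Real.cos (θ t) * p, ?_⟩
    rw [hZd.deriv, hW', hN']
    module
end

section
/- Let m ≥ 3, let γ : ℝ → EuclideanSpace ℝ (Fin m) be a smooth unit-speed curve with nowhere-vanishing curvature κ(t) = ‖γ''(t)‖ > 0 and principal normal P = γ''/κ. Let N be a unit normal field along γ such that N'(t) is a scalar multiple of γ'(t) for every t (γ is a line of curvature with respect to N), let H be a smooth map with ‖H(t)‖ = 1 and H(t) ∈ ℋ(N)_t for all t, parallel in ℋ(N) (π_{ℋ(N)_t}(H'(t)) = 0 for all t), and let θ : ℝ → ℝ be smooth with P(t) = -sin(θ(t)) H(t) + cos(θ(t)) N(t) for all t (P is a parallel rotation of N). Then γ is three-dimensional: setting H₁(t) = cos(θ(t)) H(t) + sin(θ(t)) N(t) and τ = θ', one has ‖H₁(t)‖ = 1, ⟨H₁(t), γ'(t)⟩ = ⟨H₁(t), P(t)⟩ = 0, P'(t)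 = -κ(t) γ'(t) − τ(t) H₁(t), and H₁'(t) = τ(t) P(t) for all t. -/
open scoped RealInnerProductSpace

/-- If `γ` is a line of curvature of `S` and the principal normal `P` is a parallel
rotation of the surface normal `N`, then `γ` is three-dimensional, with
`H₁ = cos θ · H + sin θ · N` and torsion `τ = θ'`. -/
theorem threeDimensional_of_parallel_rotation_principal_normal
    (m : ℕ) (hm : 3 ≤ m)
    (γ : ℝ → EuclideanSpace ℝ (Fin m))
    (hsmooth : ContDiff ℝ (⊤ : ℕ∞) γ)
    (hunit : ∀ t, ‖deriv γ t‖ = 1)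
    (hcurv : ∀ t, ‖deriv (deriv γ) t‖ > 0)
    (P : ℝ → EuclideanSpace ℝ (Fin m))
    (hP : ∀ t, P t = ‖deriv (deriv γ) t‖⁻¹ • deriv (deriv γ) t)
    (N : ℝ → EuclideanSpace ℝ (Fin m))
    (hNsmooth : ContDiff ℝ (⊤ : ℕ∞) N)
    (hNunit : ∀ t, ‖N t‖ = 1)
    (hNorth : ∀ t, ⟪N t, deriv γ t⟫ = 0)
    (hRodrigues : ∀ t, ∃ c : ℝ, deriv N t = c • deriv γ t)
    (H : ℝ → EuclideanSpace ℝ (Fin m))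
    (hHsmooth : ContDiff ℝ (⊤ : ℕ∞) H)
    (hHunit : ∀ t, ‖H t‖ = 1)
    (hHmem : ∀ t, H t ∈ (Submodule.span ℝ {deriv γ t, N t})ᗮ)
    (hHparallel : ∀ t, projH γ N t (deriv H t) = 0)
    (θ : ℝ → ℝ) (hθ : ContDiff ℝ (⊤ : ℕ∞) θ)
    (hProt : ∀ t, P t = -Real.sin (θ t) • H t + Real.cos (θ t) • N t) :
    ∀ t,
      ‖Real.cos (θ t) • H t + Real.sin (θ t) • N t‖ = 1 ∧
      ⟪Real.cos (θ t) • H t + Real.sin (θ t) • N t, deriv γ t⟫ = 0 ∧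
      ⟪Real.cos (θ t) • H t + Real.sin (θ t) • N t, P t⟫ = 0 ∧
      deriv P t = -‖deriv (deriv γ) t‖ • deriv γ t -
        deriv θ t • (Real.cos (θ t) • H t + Real.sin (θ t) • N t) ∧
      deriv (fun s => Real.cos (θ s) • H s + Real.sin (θ s) • N s) t =
        deriv θ t • P t := by
  have hγ'smooth : ContDiff ℝ (⊤ : ℕ∞) (deriv γ) := (contDiff_infty_iff_deriv.mp hsmooth).2
  have hγ'd : Differentiable ℝ (deriv γ) := hγ'smooth.differentiable (by simp)
  have hNd : Differentiable ℝ N := hNsmooth.differentiable (by simp)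
  have hHd : Differentiable ℝ H := hHsmooth.differentiable (by simp)
  have hθd : Differentiable ℝ θ := hθ.differentiable (by simp)
  have hTmem : ∀ t, deriv γ t ∈ Submodule.span ℝ {deriv γ t, N t} := fun t =>
    Submodule.subset_span (Set.mem_insert _ _)
  have hNmem : ∀ t, N t ∈ Submodule.span ℝ {deriv γ t, N t} := fun t =>
    Submodule.subset_span (Set.mem_insert_of_mem _ rfl)
  have hHT : ∀ t, ⟪H t, deriv γ t⟫ = 0 := fun t => by
    have := ((Submodule.mem_orthogonal _ _).mp (hHmem t)) _ (hTmem t)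
    rwa [real_inner_comm] at this
  have hHN : ∀ t, ⟪H t, N t⟫ = 0 := fun t => by
    have := ((Submodule.mem_orthogonal _ _).mp (hHmem t)) _ (hNmem t)
    rwa [real_inner_comm] at this
  have hTT : ∀ t, ⟪deriv γ t, deriv γ t⟫ = 1 := fun t => by
    rw [real_inner_self_eq_norm_sq, hunit t]; norm_num
  have hNN : ∀ t, ⟪N t, N t⟫ = 1 := fun t => by
    rw [real_inner_self_eq_norm_sq, hNunit t]; norm_num
  have hHH : ∀ t, ⟪H t, H t⟫ = 1 := fun t => by
    rw [real_inner_self_eq_norm_sq, hHunit t]; norm_num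
  have hγ'' : ∀ t, deriv (deriv γ) t = ‖deriv (deriv γ) t‖ • P t := fun t => by
    rw [hP t, smul_smul, mul_inv_cancel₀ (ne_of_gt (hcurv t)), one_smul]
  have hHP : ∀ t, ⟪H t, P t⟫ = -Real.sin (θ t) := fun t => by
    rw [hProt t, inner_add_right, real_inner_smul_right, real_inner_smul_right,
      hHH t, hHN t]
    ring
  have hNP : ∀ t, ⟪N t, P t⟫ = Real.cos (θ t) := fun t => by
    rw [hProt t, inner_add_right, real_inner_smul_right, real_inner_smul_right,
      real_inner_comm (H t) (N t), hHN t, hNN t]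
    ring
  -- derivative of N
  have hN' : ∀ t, deriv N t = (-(‖deriv (deriv γ) t‖ * Real.cos (θ t))) • deriv γ t := by
    intro t
    obtain ⟨c, hc⟩ := hRodrigues t
    have d1 := (HasDerivAt.inner ℝ ((hNd t).hasDerivAt) ((hγ'd t).hasDerivAt)).deriv
    rw [funext hNorth, deriv_const] at d1
    have h2 : ⟪N t, deriv (deriv γ) t⟫ = ‖deriv (deriv γ) t‖ * Real.cos (θ t) := by
      conv_lhs => rw [hγ'' t]
      rw [real_inner_smul_right, hNP t]
    have h3 : ⟪deriv N t, deriv γ t⟫ = c := by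
      rw [hc, real_inner_smul_left, hTT t, mul_one]
    have hcval : c = -(‖deriv (deriv γ) t‖ * Real.cos (θ t)) := by
      rw [h2, h3] at d1; linarith
    rw [hc, hcval]
  -- derivative of H
  have hH' : ∀ t, deriv H t = (‖deriv (deriv γ) t‖ * Real.sin (θ t)) • deriv γ t := by
    intro t
    -- H' ∈ span {T, N}
    have hmem : deriv H t ∈ Submodule.span ℝ {deriv γ t, N t} := by
      have h0 := hHparallel t
      unfold projH at h0
      rw [Submodule.coe_eq_zero, Submodule.orthogonalProjectionOnto_eq_zero_iff,
        Submodule.orthogonal_orthogonal] at h0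
      exact h0
    obtain ⟨a, b, hab⟩ := Submodule.mem_span_pair.mp hmem
    -- inner products of H'
    have d1 := (HasDerivAt.inner ℝ ((hHd t).hasDerivAt) ((hγ'd t).hasDerivAt)).deriv
    rw [funext hHT, deriv_const] at d1
    have d2 := (HasDerivAt.inner ℝ ((hHd t).hasDerivAt) ((hNd t).hasDerivAt)).deriv
    rw [funext hHN, deriv_const] at d2
    have e1 : ⟪H t, deriv (deriv γ) t⟫ = -(‖deriv (deriv γ) t‖ * Real.sin (θ t)) := by
      conv_lhs => rw [hγ'' t]
      rw [real_inner_smul_right, hHP t]; ring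
    have e2 : ⟪H t, deriv N t⟫ = 0 := by
      rw [hN' t, real_inner_smul_right, hHT t, mul_zero]
    have f1 : ⟪deriv H t, deriv γ t⟫ = a := by
      rw [← hab, inner_add_left, real_inner_smul_left, real_inner_smul_left, hTT t, hNorth t]
      ring
    have f2 : ⟪deriv H t, N t⟫ = b := by
      rw [← hab, inner_add_left, real_inner_smul_left, real_inner_smul_left, hNN t,
        real_inner_comm (N t) (deriv γ t), hNorth t]
      ring
    have ha : a = ‖deriv (deriv γ) t‖ * Real.sin (θ t) := by
      rw [e1, f1] at d1; linarith
    have hb : b = 0 := by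
      rw [e2, f2] at d2; linarith
    rw [← hab, ha, hb, zero_smul, add_zero]
  intro t
  have hθt : HasDerivAt θ (deriv θ t) t := (hθd t).hasDerivAt
  have hHt : HasDerivAt H (deriv H t) t := (hHd t).hasDerivAt
  have hNt : HasDerivAt N (deriv N t) t := (hNd t).hasDerivAt
  refine ⟨?_, ?_, ?_, ?_, ?_⟩
  · set x := Real.cos (θ t) • H t + Real.sin (θ t) • N t with hx
    have hsq : ‖x‖ ^ 2 = 1 := by
      rw [hx, norm_add_sq_real, real_inner_smul_left, real_inner_smul_right, hHN t,
        norm_smul, norm_smul, hHunit t, hNunit t, Real.norm_eq_abs, Real.norm_eq_abs,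
        mul_one, mul_one, sq_abs, sq_abs]
      linear_combination Real.sin_sq_add_cos_sq (θ t)
    have hfac : (‖x‖ - 1) * (‖x‖ + 1) = 0 := by linear_combination hsq
    rcases mul_eq_zero.mp hfac with h | h
    · linarith
    · have := norm_nonneg x
      linarith
  · rw [inner_add_left, real_inner_smul_left, real_inner_smul_left, hHT t, hNorth t]
    ring
  · rw [hProt t]
    simp only [inner_add_left, inner_add_right, real_inner_smul_left, real_inner_smul_right,
      real_inner_comm (H t) (N t), hHH t, hNN t, hHN t]
    ring
  · have hPfun : P = fun s => -Real.sin (θ s) • H s + Real.cos (θ s) • N s := funext hProt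
    rw [hPfun]
    have hd : HasDerivAt (fun s => -Real.sin (θ s) • H s + Real.cos (θ s) • N s)
        ((-Real.sin (θ t) • deriv H t + (-(Real.cos (θ t) * deriv θ t)) • H t) +
         (Real.cos (θ t) • deriv N t + (-Real.sin (θ t) * deriv θ t) • N t)) t :=
      (hθt.sin.neg.smul hHt).add (hθt.cos.smul hNt)
    rw [hd.deriv, hH' t, hN' t]
    match_scalars
    · linear_combination (-‖deriv (deriv γ) t‖) * Real.sin_sq_add_cos_sq (θ t)
    · ring
    · ring
  · have hd : HasDerivAt (fun s => Real.cos (θ s) • H s + Real.sin (θ s) • N s)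
        ((Real.cos (θ t) • deriv H t + (-Real.sin (θ t) * deriv θ t) • H t) +
         (Real.sin (θ t) • deriv N t + (Real.cos (θ t) * deriv θ t) • N t)) t :=
      (hθt.cos.smul hHt).add (hθt.sin.smul hNt)
    rw [hd.deriv, hH' t, hN' t, hProt t]
    match_scalars <;> ring
end
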